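/- arXiv:2006.11334 — 2 statements merged into one kernel-verified Lean document; each statement's English description precedes it below -/
import Mathlib

section
/- Let G be a simple graph on a countable vertex set, and let W1 and W2 be disjoint independent subgraphs of G (i.e., disjoint vertex sets each inducing an independent subgraph). Then W1 ∪ W2 is an independent subgraph of G. -/
namespace PaperMatchings

variable {V : Type*}

/-- The support of a set of edges: all vertices incident to some edge in `M`. -/
def supp (M : Set (Sym2 V)) : Set V := {v | ∃ e ∈ M, v ∈ e}

/-- `M` is a matching of `G`: a set of edges of `G` such that no vertex is
incident to more than one edge of `M`. -/
def IsMatching (G : SimpleGraph V) (M : Set (Sym2 V)) : Prop :=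
  M ⊆ G.edgeSet ∧ ∀ (v : V), ∀ e ∈ M, ∀ e' ∈ M, v ∈ e → v ∈ e' → e = e'

/-- A perfect matching: a matching whose support is all of `V`. -/
def IsPerfectMatching (G : SimpleGraph V) (M : Set (Sym2 V)) : Prop :=
  IsMatching G M ∧ supp M = Set.univ

/-- A (finite or infinite) path in `G`, given by its number of vertices `n : ℕ∞`
(`⊤` meaning infinite) and the enumeration `f` of its vertices: it is injective on
indices below `n` and consecutive vertices are adjacent. -/
def IsPath (G : SimpleGraph V) (n : ℕ∞) (f : ℕ → V) : Prop :=
  1 ≤ n ∧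
  (∀ i j : ℕ, (i : ℕ∞) < n → (j : ℕ∞) < n → f i = f j → i = j) ∧
  (∀ i : ℕ, ((i : ℕ∞) + 1) < n → G.Adj (f i) (f (i + 1)))

/-- The consecutive edges of the path lie alternately in `M` and outside `M`. -/
def IsAlternating (M : Set (Sym2 V)) (n : ℕ∞) (f : ℕ → V) : Prop :=
  ∀ i : ℕ, ((i : ℕ∞) + 2) < n →
    (s(f i, f (i + 1)) ∈ M ↔ s(f (i + 1), f (i + 2)) ∉ M)

/-- An `M`-augmenting path starting at `s`: an `M`-alternating path (with at least one
edge) starting at the unmatched vertex `s`, which is either infinite or ends at an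
unmatched vertex. -/
def IsAugmentingPath (G : SimpleGraph V) (M : Set (Sym2 V)) (n : ℕ∞) (f : ℕ → V)
    (s : V) : Prop :=
  IsPath G n f ∧ IsAlternating M n f ∧ 1 < n ∧ f 0 = s ∧ s ∉ supp M ∧
  ∀ k : ℕ, n = (k : ℕ∞) + 1 → f k ∉ supp M

/-- The path contains at least one edge of `M`. -/
def IsProper (M : Set (Sym2 V)) (n : ℕ∞) (f : ℕ → V) : Prop :=
  ∃ i : ℕ, ((i : ℕ∞) + 1) < n ∧ s(f i, f (i + 1)) ∈ M

/-- Condition (A): for every matching `M` and every vertex `s` not in the support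
of `M` there is an `M`-augmenting path starting at `s`. -/
def ConditionA (G : SimpleGraph V) : Prop :=
  ∀ M : Set (Sym2 V), IsMatching G M → ∀ s : V, s ∉ supp M →
    ∃ (n : ℕ∞) (f : ℕ → V), IsAugmentingPath G M n f s

/-- An independent matching: a matching admitting no proper augmenting path. -/
def IndepMatching (G : SimpleGraph V) (M : Set (Sym2 V)) : Prop :=
  IsMatching G M ∧
    ¬ ∃ (s : V) (n : ℕ∞) (f : ℕ → V), IsAugmentingPath G M n f s ∧ IsProper M n f

/-- The induced subgraph of `G` on the vertex set `S` (vertices outside `S`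
become isolated). -/
def restrict (G : SimpleGraph V) (S : Set V) : SimpleGraph V where
  Adj u v := G.Adj u v ∧ u ∈ S ∧ v ∈ S
  symm := by
    constructor
    intro u v h
    exact ⟨h.1.symm, h.2.2, h.2.1⟩
  loopless := by
    constructor
    intro v h
    exact G.irrefl h.1

/-- `W` is an independent subgraph of `G`: the induced subgraph `G[W]` has a perfect
matching (i.e. `G` has a matching with support exactly `W`) and every such matching
is an independent matching of `G`. -/
def IndepSubgraph (G : SimpleGraph V) (W : Set V) : Prop :=
  (∃ M, IsMatching G M ∧ supp M = W) ∧
  ∀ M, IsMatching G M → supp M = W → IndepMatching G M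

/-- The induced subgraph `G[W]` satisfies condition (A): for every matching of
`G[W]` and every vertex of `W` not in its support, there is an augmenting path
inside `G[W]`. -/
def ConditionAOn (G : SimpleGraph V) (W : Set V) : Prop :=
  ∀ M : Set (Sym2 V), IsMatching (restrict G W) M → ∀ s ∈ W, s ∉ supp M →
    ∃ (n : ℕ∞) (f : ℕ → V), IsAugmentingPath (restrict G W) M n f s


lemma mem_supp_iff {M : Set (Sym2 V)} {v : V} :
    v ∈ supp M ↔ ∃ w, s(v, w) ∈ M := by
  constructor
  · rintro ⟨e, heM, hve⟩
    induction e with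
    | h a b =>
      rcases Sym2.mem_iff.mp hve with rfl | rfl
      · exact ⟨b, heM⟩
      · exact ⟨a, by rwa [Sym2.eq_swap]⟩
  · rintro ⟨w, hw⟩
    exact ⟨s(v, w), hw, Sym2.mem_mk_left _ _⟩

lemma supp_mono {M M' : Set (Sym2 V)} (h : M ⊆ M') : supp M ⊆ supp M' := by
  rintro v ⟨e, he, hv⟩
  exact ⟨e, h he, hv⟩

lemma supp_union (M M' : Set (Sym2 V)) : supp (M ∪ M') = supp M ∪ supp M' := by
  ext v
  constructor
  · rintro ⟨e, (he | he), hv⟩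
    · exact Or.inl ⟨e, he, hv⟩
    · exact Or.inr ⟨e, he, hv⟩
  · rintro (⟨e, he, hv⟩ | ⟨e, he, hv⟩)
    · exact ⟨e, Or.inl he, hv⟩
    · exact ⟨e, Or.inr he, hv⟩

open Classical in
noncomputable def partnerFn (A : Set (Sym2 V)) (v : V) : V :=
  if h : ∃ w, s(v, w) ∈ A then h.choose else v

lemma partnerFn_mem {A : Set (Sym2 V)} {v : V} (h : v ∈ supp A) :
    s(v, partnerFn A v) ∈ A := by
  rw [mem_supp_iff] at h
  rw [partnerFn, dif_pos h]
  exact h.choose_spec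

lemma partnerFn_eq {G : SimpleGraph V} {A : Set (Sym2 V)} (hA : IsMatching G A)
    {v w : V} (h : s(v, w) ∈ A) : partnerFn A v = w := by
  have hv : v ∈ supp A := mem_supp_iff.mpr ⟨w, h⟩
  have h2 := partnerFn_mem hv
  have := hA.2 v _ h2 _ h (Sym2.mem_mk_left _ _) (Sym2.mem_mk_left _ _)
  rcases Sym2.eq_iff.mp this with ⟨-, h⟩ | ⟨h1, h2⟩
  · exact h
  · rw [h2, h1]
lemma cast_succ_enat (i : ℕ) : ((i + 1 : ℕ) : ℕ∞) = (i : ℕ∞) + 1 := by push_cast; ring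

lemma enat_mono_lt {i j : ℕ} {n : ℕ∞} (hij : i ≤ j) (h : (j : ℕ∞) < n) : (i : ℕ∞) < n :=
  lt_of_le_of_lt (by exact_mod_cast hij) h

lemma parity_of_aug {G : SimpleGraph V} {M : Set (Sym2 V)} {n : ℕ∞} {f : ℕ → V} {s : V}
    (haug : IsAugmentingPath G M n f s) :
    ∀ i : ℕ, ((i : ℕ∞) + 1) < n → (s(f i, f (i + 1)) ∈ M ↔ Odd i) := by
  obtain ⟨-, halt, -, hf0, hsM, -⟩ := haug
  intro i
  induction i with
  | zero =>
    intro _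
    refine iff_of_false ?_ (by decide)
    intro hmem
    exact hsM ⟨s(f 0, f 1), hmem, by rw [hf0] at *; exact Sym2.mem_mk_left _ _⟩
  | succ i ih =>
    intro h
    have h2 : ((i : ℕ∞) + 2) < n := by
      rw [cast_succ_enat, add_assoc, one_add_one_eq_two] at h
      exact h
    have hi1 : ((i : ℕ∞) + 1) < n := lt_of_le_of_lt (by
      have : (1 : ℕ∞) ≤ 2 := by norm_num
      exact add_le_add_right this _) h2
    have halt' := halt i h2
    rw [ih hi1] at halt'
    show s(f (i + 1), f (i + 2)) ∈ M ↔ Odd (i + 1)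
    rw [Nat.odd_add_one]
    tauto

lemma proper_facts {G : SimpleGraph V} {M : Set (Sym2 V)} {n : ℕ∞} {f : ℕ → V} {s : V}
    (haug : IsAugmentingPath G M n f s) (hprop : IsProper M n f) :
    (2 : ℕ∞) < n ∧ s(f 1, f 2) ∈ M := by
  obtain ⟨i0, hi0, hi0M⟩ := hprop
  have hodd : Odd i0 := (parity_of_aug haug i0 hi0).mp hi0M
  have h1 : 1 ≤ i0 := hodd.pos
  have h2n : (2 : ℕ∞) < n := by
    refine lt_of_le_of_lt ?_ hi0
    have : ((1 : ℕ) : ℕ∞) + 1 ≤ (i0 : ℕ∞) + 1 := by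
      exact add_le_add_left (by exact_mod_cast h1) 1
    exact (show (2:ℕ∞) = ((1:ℕ):ℕ∞) + 1 by norm_num).trans_le this
  refine ⟨h2n, ?_⟩
  have := parity_of_aug haug 1 (by rw [Nat.cast_one, one_add_one_eq_two]; exact h2n)
  exact this.mpr ⟨0, by ring⟩
lemma union_matching {G : SimpleGraph V} {M1 M2 : Set (Sym2 V)}
    (h1 : IsMatching G M1) (h2 : IsMatching G M2)
    (hd : ∀ v, v ∈ supp M1 → v ∈ supp M2 → False) : IsMatching G (M1 ∪ M2) := by
  refine ⟨Set.union_subset h1.1 h2.1, ?_⟩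
  intro v e he e' he' hv hv'
  rcases he with he | he <;> rcases he' with he' | he'
  · exact h1.2 v e he e' he' hv hv'
  · exact absurd (hd v ⟨e, he, hv⟩ ⟨e', he', hv'⟩) not_false
  · exact absurd (hd v ⟨e', he', hv'⟩ ⟨e, he, hv⟩) not_false
  · exact h2.2 v e he e' he' hv hv'

open Classical in
lemma cut_lemma {G : SimpleGraph V} {M1 M2 : Set (Sym2 V)} {n : ℕ∞} {f : ℕ → V} {s : V}
    (h1 : IsMatching G M1) (h2 : IsMatching G M2)
    (hd : ∀ v, v ∈ supp M1 → v ∈ supp M2 → False)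
    (haug : IsAugmentingPath G (M1 ∪ M2) n f s)
    (h2n : (2 : ℕ∞) < n) (he1 : s(f 1, f 2) ∈ M1)
    (hI : IndepMatching G M1) : False := by
  have parity := parity_of_aug haug
  obtain ⟨⟨h1n, hinj, hadj⟩, halt, hn1, hf0, hsM, hend⟩ := haug
  have hsM1 : s ∉ supp M1 := fun h => hsM (supp_mono Set.subset_union_left h)
  by_cases H : ∃ k : ℕ, ((k : ℕ∞) + 1) < n ∧ s(f k, f (k + 1)) ∈ M2
  · -- cut the path just before the first M2-edge
    have Qk := Nat.find_spec H
    set k := Nat.find H with hk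
    have hmin : ∀ m < k, ¬ (((m : ℕ∞) + 1) < n ∧ s(f m, f (m + 1)) ∈ M2) :=
      fun m hm => Nat.find_min H hm
    have hk0 : k ≠ 0 := by
      intro h0
      rw [h0] at Qk
      exact hsM ⟨s(f 0, f 1), Or.inr Qk.2, by rw [hf0] at *; exact Sym2.mem_mk_left _ _⟩
    have hk1 : k ≠ 1 := by
      intro h0
      rw [h0] at Qk
      exact hd (f 1) ⟨s(f 1, f 2), he1, Sym2.mem_mk_left _ _⟩
        ⟨s(f 1, f 2), Qk.2, Sym2.mem_mk_left _ _⟩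
    have hk2 : 2 ≤ k := by omega
    have hklt : ((k : ℕ∞) + 1) < n := Qk.1
    -- membership below the cut
    have mem1 : ∀ j, j + 1 ≤ k → (s(f j, f (j + 1)) ∈ M1 ↔ Odd j) := by
      intro j hj
      have hjn : ((j : ℕ∞) + 1) < n := by
        refine lt_of_le_of_lt ?_ hklt
        have : ((j : ℕ∞)) ≤ (k : ℕ∞) := by exact_mod_cast (by omega : j ≤ k)
        exact add_le_add_left this 1
      constructor
      · intro hm
        exact (parity j hjn).mp (Or.inl hm)
      · intro hodd
        rcases (parity j hjn).mpr hodd with hm | hm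
        · exact hm
        · rcases Nat.lt_or_ge j k with hlt | hge
          · exact absurd ⟨hjn, hm⟩ (hmin j hlt)
          · omega
    refine hI.2 ⟨s, (k : ℕ∞) + 1, f, ⟨⟨?_, ?_, ?_⟩, ?_, ?_, hf0, hsM1, ?_⟩, ?_⟩
    · exact le_trans (by norm_num) (le_add_right (by exact_mod_cast hk2 : (2:ℕ∞) ≤ (k:ℕ∞)))
    · intro i j hi hj hfij
      have hi' : (i : ℕ∞) < n := lt_trans hi hklt
      have hj' : (j : ℕ∞) < n := lt_trans hj hklt
      exact hinj i j hi' hj' hfij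
    · intro i hi
      exact hadj i (lt_trans hi hklt)
    · intro i hi
      have hi' : i + 2 < k + 1 := by exact_mod_cast (by push_cast; exact hi :
        ((i + 2 : ℕ) : ℕ∞) < ((k + 1 : ℕ) : ℕ∞))
      rw [mem1 i (by omega), mem1 (i + 1) (by omega), Nat.odd_add_one]
      tauto
    · exact_mod_cast (by omega : (1:ℕ) < k + 1)
    · intro j hj
      have hjk : k + 1 = j + 1 := by exact_mod_cast hj
      have hj' : j = k := by omega
      intro hjs
      rw [hj'] at hjs
      exact hd (f k) hjs ⟨s(f k, f (k + 1)), Qk.2, Sym2.mem_mk_left _ _⟩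
    · exact ⟨1, by exact_mod_cast (by omega : 1 + 1 < k + 1), (mem1 1 hk2).mpr ⟨0, by ring⟩⟩
  · -- no M2-edge on the path: the whole path is M1-augmenting
    push_neg at H
    have mem1 : ∀ j : ℕ, ((j : ℕ∞) + 1) < n → (s(f j, f (j + 1)) ∈ M1 ↔ Odd j) := by
      intro j hj
      constructor
      · intro hm
        exact (parity j hj).mp (Or.inl hm)
      · intro hodd
        rcases (parity j hj).mpr hodd with hm | hm
        · exact hm
        · exact absurd hm (H j hj)
    refine hI.2 ⟨s, n, f, ⟨⟨h1n, hinj, hadj⟩, ?_, hn1, hf0, hsM1, ?_⟩, ?_⟩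
    · intro i hi
      have hi2 : ((i : ℕ∞) + 1) < n := by
        refine lt_of_le_of_lt (add_le_add_right (by norm_num : (1:ℕ∞) ≤ 2) _) hi
      have hi3 : (((i + 1 : ℕ)) : ℕ∞) + 1 < n := by
        rw [cast_succ_enat, add_assoc, one_add_one_eq_two]
        exact hi
      rw [mem1 i hi2, mem1 (i + 1) hi3, Nat.odd_add_one]
      tauto
    · intro j hj hjs
      exact hend j hj (supp_mono Set.subset_union_left hjs)
    · exact ⟨1, by rw [Nat.cast_one, one_add_one_eq_two]; exact h2n, (mem1 1 (by rw [Nat.cast_one, one_add_one_eq_two]; exact h2n)).mpr ⟨0, by ring⟩⟩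

lemma union_indep {G : SimpleGraph V} {M1 M2 : Set (Sym2 V)}
    (hI1 : IndepMatching G M1) (hI2 : IndepMatching G M2)
    (hd : ∀ v, v ∈ supp M1 → v ∈ supp M2 → False) : IndepMatching G (M1 ∪ M2) := by
  refine ⟨union_matching hI1.1 hI2.1 hd, ?_⟩
  rintro ⟨s, n, f, haug, hprop⟩
  obtain ⟨h2n, he1⟩ := proper_facts haug hprop
  rcases he1 with he1 | he1
  · exact cut_lemma hI1.1 hI2.1 hd haug h2n he1 hI1
  · rw [Set.union_comm] at haug
    exact cut_lemma hI2.1 hI1.1 (fun v a b => hd v b a) haug h2n he1 hI2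
def pathEdges (n : ℕ∞) (f : ℕ → V) : Set (Sym2 V) :=
  {e | ∃ i : ℕ, ((i : ℕ∞) + 1) < n ∧ e = s(f i, f (i + 1))}

noncomputable def walk (N M' : Set (Sym2 V)) (s : V) : ℕ → V
  | 0 => s
  | (i + 1) => if Even i then partnerFn N (walk N M' s i) else partnerFn M' (walk N M' s i)

lemma walk_zero (N M' : Set (Sym2 V)) (s : V) : walk N M' s 0 = s := rfl

lemma walk_even {N M' : Set (Sym2 V)} {s : V} {i : ℕ} (h : Even i) :
    walk N M' s (i + 1) = partnerFn N (walk N M' s i) := by simp [walk, h]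

lemma walk_odd {N M' : Set (Sym2 V)} {s : V} {i : ℕ} (h : ¬ Even i) :
    walk N M' s (i + 1) = partnerFn M' (walk N M' s i) := by simp [walk, h]

lemma matching_ne {G : SimpleGraph V} {A : Set (Sym2 V)} (hA : IsMatching G A) {a b : V}
    (h : s(a, b) ∈ A) : a ≠ b := by
  rintro rfl
  exact G.irrefl ((SimpleGraph.mem_edgeSet G).mp (hA.1 h))

lemma enat_succ_le {j : ℕ} {n : ℕ∞} (h : (j : ℕ∞) < n) : (j : ℕ∞) + 1 ≤ n := by
  rwa [ENat.add_one_le_iff (ENat.coe_ne_top j)]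

theorem indep_of_supp_eq {G : SimpleGraph V} {M M' : Set (Sym2 V)}
    (hM : IsMatching G M) (hM' : IsMatching G M') (hss : supp M = supp M')
    (hI : IndepMatching G M') : IndepMatching G M := by
  refine ⟨hM, ?_⟩
  rintro ⟨s, n, f, haug, hprop⟩
  obtain ⟨h2n, he1⟩ := proper_facts haug hprop
  have parity := parity_of_aug haug
  obtain ⟨⟨h1n, hinj, hadj⟩, halt, hn1, hf0, hsM, hend⟩ := haug
  apply hI.2
  set PE : Set (Sym2 V) := pathEdges n f with hPE
  set N : Set (Sym2 V) := (M \ PE) ∪ (PE \ M) with hN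
  have hsM' : s ∉ supp M' := by rwa [hss] at hsM
  -- every M-edge at an on-path vertex is an on-path edge adjacent to that position
  have keyA : ∀ j : ℕ, (j : ℕ∞) < n → ∀ e ∈ M, f j ∈ e →
      ∃ i : ℕ, ((i : ℕ∞) + 1) < n ∧ e = s(f i, f (i + 1)) ∧ (j = i ∨ j = i + 1) := by
    intro j hj e heM hfj
    rcases j with _ | m
    · refine absurd ⟨e, heM, ?_⟩ hsM
      rwa [hf0] at hfj
    · by_cases hj1 : ((m + 1 : ℕ) : ℕ∞) + 1 < n
      · rcases Nat.even_or_odd m with hm | hm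
        · have hodd : Odd (m + 1) := Nat.odd_add_one.mpr (Nat.not_odd_iff_even.mpr hm)
          have hmem : s(f (m + 1), f (m + 2)) ∈ M := (parity (m + 1) hj1).mpr hodd
          have heq := hM.2 (f (m + 1)) e heM _ hmem hfj (Sym2.mem_mk_left _ _)
          exact ⟨m + 1, hj1, heq, Or.inl rfl⟩
        · have hmn : ((m : ℕ∞) + 1) < n := by rw [← cast_succ_enat]; exact hj
          have hmem : s(f m, f (m + 1)) ∈ M := (parity m hmn).mpr hm
          have heq := hM.2 (f (m + 1)) e heM _ hmem hfj (Sym2.mem_mk_right _ _)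
          exact ⟨m, hmn, heq, Or.inr rfl⟩
      · have hn' : n = ((m + 1 : ℕ) : ℕ∞) + 1 := le_antisymm (not_lt.mp hj1) (enat_succ_le hj)
        exact absurd ⟨e, heM, hfj⟩ (hend (m + 1) hn')
  have hNsub : N ⊆ G.edgeSet := by
    rintro e (⟨he, -⟩ | ⟨he, -⟩)
    · exact hM.1 he
    · obtain ⟨i, hi, rfl⟩ := he
      exact (SimpleGraph.mem_edgeSet G).mpr (hadj i hi)
  have matchN : IsMatching G N := by
    refine ⟨hNsub, ?_⟩
    have key3 : ∀ a b : ℕ, a < b → ((a : ℕ∞) + 1) < n → ((b : ℕ∞) + 1) < n →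
        s(f a, f (a + 1)) ∉ M → s(f b, f (b + 1)) ∉ M →
        ∀ v, v ∈ s(f a, f (a + 1)) → v ∈ s(f b, f (b + 1)) → False := by
      intro a b hab han hbn haM hbM v hva hvb
      have ha : (a : ℕ∞) < n := lt_of_le_of_lt le_self_add han
      have hb : (b : ℕ∞) < n := lt_of_le_of_lt le_self_add hbn
      have ha1 : ((a + 1 : ℕ) : ℕ∞) < n := by rw [cast_succ_enat]; exact han
      have hb1 : ((b + 1 : ℕ) : ℕ∞) < n := by rw [cast_succ_enat]; exact hbn
      rcases Sym2.mem_iff.mp hva with h1 | h1 <;> rcases Sym2.mem_iff.mp hvb with h2 | h2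
      · exact absurd (hinj a b ha hb (h1.symm.trans h2)) (by omega)
      · exact absurd (hinj a (b + 1) ha hb1 (h1.symm.trans h2)) (by omega)
      · have hab1 : a + 1 = b := hinj (a + 1) b ha1 hb (h1.symm.trans h2)
        have h2n' : ((a : ℕ∞) + 2) < n := by
          have : ((a : ℕ∞) + 1) + 1 < n := by
            rw [← cast_succ_enat, ← cast_succ_enat, hab1]
            exact hbn
          rwa [add_assoc, one_add_one_eq_two] at this
        have halt' := halt a h2n'
        rw [hab1] at haM
        rw [show a + 2 = b + 1 by omega, show a + 1 = b from hab1] at halt'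
        exact haM (halt'.mpr hbM)
      · exact absurd (hinj (a + 1) (b + 1) ha1 hb1 (h1.symm.trans h2)) (by omega)
    intro v e he e' he' hv hv'
    by_cases hee : e = e'
    · exact hee
    exfalso
    have mixed : ∀ e1 e2, e1 ∈ M \ PE → e2 ∈ PE \ M → v ∈ e1 → v ∈ e2 → False := by
      rintro e1 e2 ⟨h1M, h1P⟩ ⟨⟨j, hjn, rfl⟩, h2M⟩ hv1 hv2
      rcases Sym2.mem_iff.mp hv2 with hveq | hveq
      · have hjlt : (j : ℕ∞) < n := lt_of_le_of_lt le_self_add hjn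
        obtain ⟨i, hin, hei, -⟩ := keyA j hjlt e1 h1M (hveq ▸ hv1)
        exact h1P ⟨i, hin, hei⟩
      · have hjlt : ((j + 1 : ℕ) : ℕ∞) < n := by rw [cast_succ_enat]; exact hjn
        obtain ⟨i, hin, hei, -⟩ := keyA (j + 1) hjlt e1 h1M (hveq ▸ hv1)
        exact h1P ⟨i, hin, hei⟩
    rcases he with he | he <;> rcases he' with he' | he'
    · exact hee (hM.2 v e he.1 e' he'.1 hv hv')
    · exact mixed e e' he he' hv hv'
    · exact mixed e' e he' he hv' hv
    · obtain ⟨⟨a, han, rfl⟩, haM⟩ := he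
      obtain ⟨⟨b, hbn, rfl⟩, hbM⟩ := he'
      rcases Nat.lt_trichotomy a b with h | h | h
      · exact key3 a b h han hbn haM hbM v hv hv'
      · exact hee (by rw [h])
      · exact key3 b a h hbn han hbM haM v hv' hv
  have suppMN : supp M ⊆ supp N := by
    rintro v ⟨e, heM, hve⟩
    by_cases heP : e ∈ PE
    · obtain ⟨i, hin, rfl⟩ := heP
      have hodd : Odd i := (parity i hin).mp heM
      rcases Sym2.mem_iff.mp hve with hveq | hveq
      · obtain ⟨m, hm⟩ : ∃ m, i = m + 1 := ⟨i - 1, by have := hodd.pos; omega⟩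
        subst hm
        have hmn : ((m : ℕ∞) + 1) < n := by
          rw [← cast_succ_enat]
          exact lt_of_le_of_lt le_self_add hin
        have hnot : s(f m, f (m + 1)) ∉ M := by
          intro hmem
          have : Odd m := (parity m hmn).mp hmem
          rw [Nat.odd_add_one] at hodd
          exact hodd this
        refine ⟨s(f m, f (m + 1)), Or.inr ⟨⟨m, hmn, rfl⟩, hnot⟩, ?_⟩
        rw [hveq]
        exact Sym2.mem_mk_right _ _
      · by_cases hi2 : ((i + 1 : ℕ) : ℕ∞) + 1 < n
        · have hnot : s(f (i + 1), f (i + 2)) ∉ M := by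
            intro hmem
            have h2 : Odd (i + 1) := (parity (i + 1) hi2).mp hmem
            rw [Nat.odd_add_one] at h2
            exact h2 hodd
          refine ⟨s(f (i + 1), f (i + 2)), Or.inr ⟨⟨i + 1, hi2, rfl⟩, hnot⟩, ?_⟩
          rw [hveq]
          exact Sym2.mem_mk_left _ _
        · exfalso
          have hilt : ((i + 1 : ℕ) : ℕ∞) < n := by rw [cast_succ_enat]; exact hin
          have hn' : n = ((i + 1 : ℕ) : ℕ∞) + 1 := le_antisymm (not_lt.mp hi2) (enat_succ_le hilt)
          exact hend (i + 1) hn' ⟨s(f i, f (i + 1)), heM, Sym2.mem_mk_right _ _⟩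
    · exact ⟨e, Or.inl ⟨heM, heP⟩, hve⟩
  have suppM'N : supp M' ⊆ supp N := by rwa [hss] at suppMN
  have hsN : s(s, f 1) ∈ N := by
    have h01 : ((0 : ℕ) : ℕ∞) + 1 < n := by simpa using hn1
    have hmem : s(f 0, f 1) ∈ PE := ⟨0, h01, rfl⟩
    have hnot : s(f 0, f 1) ∉ M := by
      intro hm
      exact hsM ⟨s(f 0, f 1), hm, by rw [hf0]; exact Sym2.mem_mk_left _ _⟩
    rw [← hf0]
    exact Or.inr ⟨hmem, hnot⟩
  have hf1M' : f 1 ∈ supp M' := by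
    rw [← hss]
    exact ⟨s(f 1, f 2), he1, Sym2.mem_mk_left _ _⟩
  set g : ℕ → V := walk N M' s with hg
  have hg0 : g 0 = s := rfl
  have hg1 : g 1 = f 1 := by
    rw [hg, walk_even (by decide : Even 0), walk_zero]
    exact partnerFn_eq matchN hsN
  -- the master invariant
  have GOOD : ∀ m : ℕ, (∀ j, Odd j → j < m → g j ∈ supp M') →
      (∀ i, i + 1 ≤ m →
        (Even i → s(g i, g (i + 1)) ∈ N ∧ s(g i, g (i + 1)) ∉ M') ∧
        (¬ Even i → s(g i, g (i + 1)) ∈ M' ∧ s(g i, g (i + 1)) ∉ N)) ∧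
      (∀ i j, i ≤ m → j ≤ m → g i = g j → i = j) := by
    intro m
    induction m with
    | zero =>
      intro _
      exact ⟨fun i hi => absurd hi (by omega), fun i j hi hj _ => by omega⟩
    | succ m IH =>
      intro halive
      obtain ⟨IHe, IHinj⟩ := IH (fun j hj hjm => halive j hj (by omega))
      have hgeven : ∀ i : ℕ, Even i → g (i + 1) = partnerFn N (g i) := fun i h => walk_even h
      have hgodd : ∀ i : ℕ, ¬ Even i → g (i + 1) = partnerFn M' (g i) := fun i h => walk_odd h
      have NEW : (Even m → s(g m, g (m + 1)) ∈ N ∧ s(g m, g (m + 1)) ∉ M') ∧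
          (¬ Even m → s(g m, g (m + 1)) ∈ M' ∧ s(g m, g (m + 1)) ∉ N) := by
        constructor
        · intro hm
          have hsupp : g m ∈ supp N := by
            rcases Nat.eq_zero_or_pos m with rfl | hpos
            · exact mem_supp_iff.mpr ⟨f 1, by rw [hg0]; exact hsN⟩
            · obtain ⟨j, rfl⟩ : ∃ j, m = j + 1 := ⟨m - 1, by omega⟩
              have hjodd : ¬ Even j := Nat.even_add_one.mp hm
              have hedge := (IHe j (by omega)).2 hjodd
              exact suppM'N (mem_supp_iff.mpr ⟨g j, by rw [Sym2.eq_swap]; exact hedge.1⟩)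
          have hNe : s(g m, g (m + 1)) ∈ N := by
            rw [hgeven m hm]
            exact partnerFn_mem hsupp
          refine ⟨hNe, ?_⟩
          intro hM'e
          rcases Nat.eq_zero_or_pos m with rfl | hpos
          · exact hsM' ⟨_, hM'e, by rw [hg0]; exact Sym2.mem_mk_left _ _⟩
          · obtain ⟨j, rfl⟩ : ∃ j, m = j + 1 := ⟨m - 1, by omega⟩
            have hjodd : ¬ Even j := Nat.even_add_one.mp hm
            have hedgej := (IHe j (by omega)).2 hjodd
            have heq := hM'.2 (g (j + 1)) _ hM'e _ hedgej.1
              (Sym2.mem_mk_left _ _) (Sym2.mem_mk_right _ _)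
            rcases Sym2.eq_iff.mp heq with ⟨h1, h2⟩ | ⟨h1, h2⟩
            · exact absurd (IHinj (j + 1) j (by omega) (by omega) h1) (by omega)
            · rw [h2] at hNe
              obtain ⟨l, rfl⟩ : ∃ l, j = l + 1 :=
                ⟨j - 1, by rcases Nat.not_even_iff_odd.mp hjodd with ⟨t, ht⟩; omega⟩
              have hleven : Even l := by
                by_contra hl
                exact hjodd (Nat.even_add_one.mpr hl)
              have hedgel := (IHe l (by omega)).1 hleven
              have heq2 := matchN.2 (g (l + 1)) _ hNe _ hedgel.1
                (Sym2.mem_mk_right _ _) (Sym2.mem_mk_right _ _)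
              rcases Sym2.eq_iff.mp heq2 with ⟨h3, h4⟩ | ⟨h3, h4⟩
              · exact absurd (IHinj (l + 1 + 1) l (by omega) (by omega) h3) (by omega)
              · exact absurd (IHinj (l + 1) l (by omega) (by omega) h4) (by omega)
        · intro hm
          have hsupp : g m ∈ supp M' := halive m (Nat.not_even_iff_odd.mp hm) (by omega)
          have hM'e : s(g m, g (m + 1)) ∈ M' := by
            rw [hgodd m hm]
            exact partnerFn_mem hsupp
          refine ⟨hM'e, ?_⟩
          intro hNe
          obtain ⟨j, rfl⟩ : ∃ j, m = j + 1 :=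
            ⟨m - 1, by rcases Nat.not_even_iff_odd.mp hm with ⟨t, ht⟩; omega⟩
          have hjeven : Even j := by
            by_contra hl
            exact hm (Nat.even_add_one.mpr hl)
          have hedgej := (IHe j (by omega)).1 hjeven
          have heq := matchN.2 (g (j + 1)) _ hNe _ hedgej.1
            (Sym2.mem_mk_left _ _) (Sym2.mem_mk_right _ _)
          rcases Sym2.eq_iff.mp heq with ⟨h1, h2⟩ | ⟨h1, h2⟩
          · exact absurd (IHinj (j + 1) j (by omega) (by omega) h1) (by omega)
          · rw [h2] at hM'e
            rcases Nat.eq_zero_or_pos j with rfl | hjpos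
            · exact hsM' ⟨_, hM'e, by rw [hg0]; exact Sym2.mem_mk_right _ _⟩
            · obtain ⟨l, rfl⟩ : ∃ l, j = l + 1 := ⟨j - 1, by omega⟩
              have hlodd : ¬ Even l := Nat.even_add_one.mp hjeven
              have hedgel := (IHe l (by omega)).2 hlodd
              have heq2 := hM'.2 (g (l + 1)) _ hM'e _ hedgel.1
                (Sym2.mem_mk_right _ _) (Sym2.mem_mk_right _ _)
              rcases Sym2.eq_iff.mp heq2 with ⟨h3, h4⟩ | ⟨h3, h4⟩
              · exact absurd (IHinj (l + 1 + 1) l (by omega) (by omega) h3) (by omega)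
              · exact absurd (IHinj (l + 1) l (by omega) (by omega) h4) (by omega)
      have EDGE : ∀ i, i + 1 ≤ m + 1 →
          (Even i → s(g i, g (i + 1)) ∈ N ∧ s(g i, g (i + 1)) ∉ M') ∧
          (¬ Even i → s(g i, g (i + 1)) ∈ M' ∧ s(g i, g (i + 1)) ∉ N) := by
        intro i hi
        rcases Nat.lt_or_ge (i + 1) (m + 1) with h | h
        · exact IHe i (by omega)
        · have hieq : i = m := by omega
          subst hieq
          exact NEW
      refine ⟨EDGE, ?_⟩
      have KEY : ∀ j, j ≤ m → g (m + 1) = g j → False := by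
        intro j hj hgeq
        rcases Nat.even_or_odd m with hm | hm
        · have hNe := (NEW.1 hm).1
          have eN : s(g m, g j) ∈ N := by rw [← hgeq]; exact hNe
          rcases Nat.even_or_odd j with hje | hjo
          · have hout := ((EDGE j (by omega)).1 hje).1
            have heq := matchN.2 (g j) _ eN _ hout
              (Sym2.mem_mk_right _ _) (Sym2.mem_mk_left _ _)
            rcases Sym2.eq_iff.mp heq with ⟨h1, h2⟩ | ⟨h1, h2⟩
            · have hmj : m = j := IHinj m j le_rfl hj h1
              rw [← hmj] at h2
              rw [← h2] at hNe
              exact matching_ne matchN hNe rfl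
            · rcases Nat.lt_or_ge j m with hlt | hge
              · have := IHinj m (j + 1) le_rfl (by omega) h1
                have em2 := Nat.even_iff.mp hm
                have ej2 := Nat.even_iff.mp hje
                omega
              · have hjm : j = m := by omega
                subst hjm
                rw [← h1] at hNe
                exact matching_ne matchN hNe rfl
          · obtain ⟨k, rfl⟩ : ∃ k, j = k + 1 := ⟨j - 1, by rcases hjo with ⟨t, ht⟩; omega⟩
            have hke : Even k := Nat.not_odd_iff_even.mp (Nat.odd_add_one.mp hjo)
            have hin := ((EDGE k (by omega)).1 hke).1
            have heq := matchN.2 (g (k + 1)) _ eN _ hin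
              (Sym2.mem_mk_right _ _) (Sym2.mem_mk_right _ _)
            rcases Sym2.eq_iff.mp heq with ⟨h1, h2⟩ | ⟨h1, h2⟩
            · have := IHinj m k le_rfl (by omega) h1
              omega
            · have := IHinj (k + 1) k (by omega) (by omega) h2
              omega
        · have hm' : ¬ Even m := Nat.not_even_iff_odd.mpr hm
          have hMe := (NEW.2 hm').1
          have eM' : s(g m, g j) ∈ M' := by rw [← hgeq]; exact hMe
          rcases Nat.even_or_odd j with hje | hjo
          · rcases Nat.eq_zero_or_pos j with rfl | hjpos
            · refine hsM' ⟨_, eM', ?_⟩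
              rw [hg0] at eM' ⊢
              exact Sym2.mem_mk_right _ _
            · obtain ⟨k, rfl⟩ : ∃ k, j = k + 1 := ⟨j - 1, by omega⟩
              have hko : ¬ Even k := Nat.even_add_one.mp hje
              have hin := ((EDGE k (by omega)).2 hko).1
              have heq := hM'.2 (g (k + 1)) _ eM' _ hin
                (Sym2.mem_mk_right _ _) (Sym2.mem_mk_right _ _)
              rcases Sym2.eq_iff.mp heq with ⟨h1, h2⟩ | ⟨h1, h2⟩
              · have := IHinj m k le_rfl (by omega) h1
                omega
              · have := IHinj (k + 1) k (by omega) (by omega) h2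
                omega
          · have hjo' : ¬ Even j := Nat.not_even_iff_odd.mpr hjo
            have hout := ((EDGE j (by omega)).2 hjo').1
            have heq := hM'.2 (g j) _ eM' _ hout
              (Sym2.mem_mk_right _ _) (Sym2.mem_mk_left _ _)
            rcases Sym2.eq_iff.mp heq with ⟨h1, h2⟩ | ⟨h1, h2⟩
            · have hmj : m = j := IHinj m j le_rfl hj h1
              rw [← hmj] at h2
              rw [← h2] at hMe
              exact matching_ne hM' hMe rfl
            · rcases Nat.lt_or_ge j m with hlt | hge
              · have := IHinj m (j + 1) le_rfl (by omega) h1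
                have em2 := Nat.odd_iff.mp hm
                have ej2 := Nat.odd_iff.mp hjo
                omega
              · have hjm : j = m := by omega
                subst hjm
                rw [← h1] at hMe
                exact matching_ne hM' hMe rfl
      intro i j hi hj hij
      rcases Nat.lt_or_ge i (m + 1) with h | h <;> rcases Nat.lt_or_ge j (m + 1) with h' | h'
      · exact IHinj i j (by omega) (by omega) hij
      · have : j = m + 1 := by omega
        subst this
        exact absurd (KEY i (by omega) hij.symm) id
      · have : i = m + 1 := by omega
        subst this
        exact absurd (KEY j (by omega) hij) id
      · omega

  -- conclusion
  have castlt : ∀ (i j : ℕ), ((i : ℕ∞) < (j : ℕ∞) + 1) ↔ i < j + 1 := by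
    intro i j
    rw [← cast_succ_enat]
    exact Nat.cast_lt
  by_cases H : ∃ j, Odd j ∧ (∀ i, Odd i → i < j → g i ∈ supp M') ∧ g j ∉ supp M'
  · obtain ⟨j, hjodd, hjalive, hjdead⟩ := H
    obtain ⟨GE, GI⟩ := GOOD j (fun i hi hij => hjalive i hi hij)
    have hj1 : j ≠ 1 := by
      intro h
      rw [h, hg1] at hjdead
      exact hjdead hf1M'
    have hj3 : 3 ≤ j := by
      rcases hjodd with ⟨t, ht⟩
      omega
    refine ⟨s, (j : ℕ∞) + 1, g, ⟨⟨le_add_self, ?_, ?_⟩, ?_, ?_, hg0, hsM', ?_⟩, ?_⟩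
    · intro i i' hi hi' heq
      exact GI i i' (by have := (castlt i j).mp hi; omega)
        (by have := (castlt i' j).mp hi'; omega) heq
    · intro i hi
      have hb : i + 1 ≤ j := by
        rw [← cast_succ_enat] at hi
        have := (castlt (i + 1) j).mp hi
        omega
      rcases Nat.even_or_odd i with he | ho
      · exact (SimpleGraph.mem_edgeSet G).mp (hNsub ((GE i hb).1 he).1)
      · exact (SimpleGraph.mem_edgeSet G).mp
          (hM'.1 ((GE i hb).2 (Nat.not_even_iff_odd.mpr ho)).1)
    · intro i hi
      have hb : i + 2 ≤ j := by
        have h2 : ((i + 2 : ℕ) : ℕ∞) < (j : ℕ∞) + 1 := by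
          push_cast
          rw [show (i : ℕ∞) + 2 = ((i : ℕ∞) + 1) + 1 by ring]
          exact hi
        have := (castlt (i + 2) j).mp h2
        omega
      rcases Nat.even_or_odd i with he | ho
      · have l := (GE i (by omega)).1 he
        have r := (GE (i + 1) (by omega)).2 (fun h => (Nat.even_add_one.mp h) he)
        exact iff_of_false l.2 (not_not_intro r.1)
      · have l := (GE i (by omega)).2 (Nat.not_even_iff_odd.mpr ho)
        have r := (GE (i + 1) (by omega)).1
          (Nat.even_add_one.mpr (Nat.not_even_iff_odd.mpr ho))
        exact iff_of_true l.1 r.2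
    · exact_mod_cast (by omega : (1 : ℕ) < j + 1)
    · intro k hk
      have h' : j + 1 = k + 1 := by exact_mod_cast hk
      have hjk : j = k := by omega
      rw [← hjk]
      exact hjdead
    · refine ⟨1, ?_, ((GE 1 (by omega)).2 (by decide)).1⟩
      exact_mod_cast (by omega : (1 : ℕ) + 1 < j + 1)
  · push_neg at H
    have ALL : ∀ j, Odd j → g j ∈ supp M' := by
      intro j
      induction j using Nat.strong_induction_on with
      | _ j ih =>
        intro hj
        exact H j hj (fun i hi hij => ih i hij hi)
    have GOODALL := fun m => GOOD m (fun j hj _ => ALL j hj)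
    refine ⟨s, ⊤, g, ⟨⟨le_top, ?_, ?_⟩, ?_, ?_, hg0, hsM', ?_⟩, ?_⟩
    · intro i i' _ _ heq
      exact (GOODALL (i + i')).2 i i' (by omega) (by omega) heq
    · intro i _
      have GE := (GOODALL (i + 1)).1
      rcases Nat.even_or_odd i with he | ho
      · exact (SimpleGraph.mem_edgeSet G).mp (hNsub ((GE i (by omega)).1 he).1)
      · exact (SimpleGraph.mem_edgeSet G).mp
          (hM'.1 ((GE i (by omega)).2 (Nat.not_even_iff_odd.mpr ho)).1)
    · intro i _
      have GE := (GOODALL (i + 2)).1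
      rcases Nat.even_or_odd i with he | ho
      · have l := (GE i (by omega)).1 he
        have r := (GE (i + 1) (by omega)).2 (fun h => (Nat.even_add_one.mp h) he)
        exact iff_of_false l.2 (not_not_intro r.1)
      · have l := (GE i (by omega)).2 (Nat.not_even_iff_odd.mpr ho)
        have r := (GE (i + 1) (by omega)).1
          (Nat.even_add_one.mpr (Nat.not_even_iff_odd.mpr ho))
        exact iff_of_true l.1 r.2
    · exact_mod_cast ENat.coe_lt_top 1
    · intro k hk
      refine absurd hk.symm ?_
      rw [← cast_succ_enat]
      exact ENat.coe_ne_top (k + 1)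
    · refine ⟨1, ?_, ?_⟩
      · exact_mod_cast ENat.coe_lt_top 2
      · exact (((GOODALL 2).1 1 (by omega)).2 (by decide)).1

/-- The union of two disjoint independent subgraphs is independent. -/
theorem indepSubgraph_union_of_disjoint {V : Type*} [Countable V] (G : SimpleGraph V)
    (W1 W2 : Set V) (hdisj : Disjoint W1 W2)
    (h1 : IndepSubgraph G W1) (h2 : IndepSubgraph G W2) :
    IndepSubgraph G (W1 ∪ W2) := by
  obtain ⟨⟨M1, hM1, hsupp1⟩, hind1⟩ := h1
  obtain ⟨⟨M2, hM2, hsupp2⟩, hind2⟩ := h2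
  have hd : ∀ v, v ∈ supp M1 → v ∈ supp M2 → False := by
    intro v a b
    rw [hsupp1] at a
    rw [hsupp2] at b
    exact Set.disjoint_left.mp hdisj a b
  constructor
  · exact ⟨M1 ∪ M2, union_matching hM1 hM2 hd, by rw [supp_union, hsupp1, hsupp2]⟩
  · intro M hM hs
    have hU : IndepMatching G (M1 ∪ M2) :=
      union_indep (hind1 M1 hM1 hsupp1) (hind2 M2 hM2 hsupp2) hd
    exact indep_of_supp_eq hM (union_matching hM1 hM2 hd)
      (by rw [hs, supp_union, hsupp1, hsupp2]) hU

end PaperMatchings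
end

section
/- Every locally finite simple graph on a countable vertex set that satisfies condition (A) has a perfect matching. -/
namespace PaperMatchings

variable {V : Type*}

lemma enat_lt_succ (i : ℕ) : (i : ℕ∞) < (i : ℕ∞) + 1 := by
  have : ((i : ℕ) : ℕ∞) < ((i + 1 : ℕ) : ℕ∞) := by exact_mod_cast Nat.lt_succ_self i
  simpa using this

lemma augment {G : SimpleGraph V} {M : Set (Sym2 V)} (hM : IsMatching G M) {s : V}
    {n : ℕ∞} {f : ℕ → V} (hP : IsAugmentingPath G M n f s) :
    ∃ M', IsMatching G M' ∧ supp M ∪ {s} ⊆ supp M' := by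
  obtain ⟨⟨h1n, inj, adj⟩, alt, hn1, hf0, hs, hend⟩ := hP
  -- parity of path edges
  have parity : ∀ i : ℕ, ((i : ℕ∞) + 1) < n → (s(f i, f (i + 1)) ∈ M ↔ Odd i) := by
    intro i
    induction i with
    | zero =>
      intro _
      constructor
      · intro h0
        exact absurd ⟨s(f 0, f 1), h0, hf0 ▸ Sym2.mem_mk_left _ _⟩ hs
      · intro hodd
        simp [Nat.odd_iff] at hodd
    | succ i ih =>
      intro h
      have h2 : ((i : ℕ∞) + 2) < n := by convert h using 1; push_cast; ring
      have h1 : ((i : ℕ∞) + 1) < n :=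
        lt_of_le_of_lt (by gcongr <;> norm_num) h2
      have := alt i h2
      rw [Nat.odd_add_one, ← ih h1]
      tauto
  -- every matched vertex on the path is matched by an odd path edge
  have C : ∀ a : ℕ, (a : ℕ∞) < n → f a ∈ supp M →
      ∃ b : ℕ, Odd b ∧ ((b : ℕ∞) + 1) < n ∧ (a = b ∨ a = b + 1) ∧
        s(f b, f (b + 1)) ∈ M := by
    intro a ha hma
    have ha0 : a ≠ 0 := by rintro rfl; exact hs (hf0 ▸ hma)
    obtain ⟨c, rfl⟩ : ∃ c, a = c + 1 := ⟨a - 1, (Nat.succ_pred_eq_of_pos (Nat.pos_of_ne_zero ha0)).symm⟩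
    have hle : ((c + 1 : ℕ) : ℕ∞) + 1 ≤ n := (ENat.add_one_le_iff (ENat.coe_ne_top _)).mpr ha
    rcases hle.lt_or_eq with han | han
    · -- both neighboring edges exist
      have hc : ((c : ℕ∞) + 1) < n := by
        have : ((c : ℕ∞) + 1) = ((c + 1 : ℕ) : ℕ∞) := by push_cast; ring
        rw [this]; exact ha
      rcases Nat.even_or_odd c with hce | hco
      · exact ⟨c + 1, Even.add_one hce, han, Or.inl rfl,
          (parity (c + 1) han).mpr (Even.add_one hce)⟩
      · exact ⟨c, hco, hc, Or.inr rfl, (parity c hc).mpr hco⟩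
    · exact absurd hma (hend (c + 1) han.symm)
  classical
  set M' : Set (Sym2 V) :=
    {e | e ∈ M ∧ ∀ i : ℕ, ((i : ℕ∞) + 1) < n → e ≠ s(f i, f (i + 1))} ∪
    {e | ∃ i : ℕ, Even i ∧ ((i : ℕ∞) + 1) < n ∧ e = s(f i, f (i + 1))} with hM'
  -- a vertex on a path edge has cast < n
  have memc : ∀ (v : V) (j : ℕ), ((j : ℕ∞) + 1) < n → v ∈ s(f j, f (j + 1)) →
      ∃ a : ℕ, v = f a ∧ (a : ℕ∞) < n ∧ (a = j ∨ a = j + 1) := by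
    intro v j hj hv
    rw [Sym2.mem_iff] at hv
    rcases hv with rfl | rfl
    · exact ⟨j, rfl, lt_trans (enat_lt_succ j) hj, Or.inl rfl⟩
    · exact ⟨j + 1, rfl, by push_cast; exact hj, Or.inr rfl⟩
  -- mixed case is impossible
  have mixed : ∀ (v : V) (e : Sym2 V), e ∈ M →
      (∀ i : ℕ, ((i : ℕ∞) + 1) < n → e ≠ s(f i, f (i + 1))) →
      ∀ j : ℕ, ((j : ℕ∞) + 1) < n → v ∈ e → v ∈ s(f j, f (j + 1)) → False := by
    intro v e heM hne j hj hv hv'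
    obtain ⟨a, rfl, ha, _⟩ := memc v j hj hv'
    obtain ⟨b, _, hb, hab, hpb⟩ := C a ha ⟨e, heM, hv⟩
    have hfab : f a ∈ s(f b, f (b + 1)) := by
      rcases hab with rfl | rfl
      · exact Sym2.mem_mk_left _ _
      · exact Sym2.mem_mk_right _ _
    exact hne b hb (hM.2 (f a) e heM _ hpb hv hfab)
  refine ⟨M', ⟨?_, ?_⟩, ?_⟩
  · rintro e (⟨heM, _⟩ | ⟨i, _, hi, rfl⟩)
    · exact hM.1 heM
    · exact (G.mem_edgeSet).mpr (adj i hi)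
  · rintro v e (⟨heM, hne⟩ | ⟨i, hie, hi, rfl⟩) e' (⟨heM', hne'⟩ | ⟨j, hje, hj, rfl⟩) hv hv'
    · exact hM.2 v e heM e' heM' hv hv'
    · exact absurd (mixed v e heM hne j hj hv hv') id
    · exact absurd (mixed v e' heM' hne' i hi hv' hv) id
    · obtain ⟨a, hva, ha, haij⟩ := memc v i hi hv
      obtain ⟨b, hvb, hb, hbij⟩ := memc v j hj hv'
      have hab : a = b := inj a b ha hb (hva ▸ hvb ▸ rfl)
      have : i = j := by
        rw [Nat.even_iff] at hie hje
        omega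
      rw [this]
  · rintro v (⟨e, heM, hve⟩ | rfl)
    · by_cases h : ∀ i : ℕ, ((i : ℕ∞) + 1) < n → e ≠ s(f i, f (i + 1))
      · exact ⟨e, Or.inl ⟨heM, h⟩, hve⟩
      · push_neg at h
        obtain ⟨i, hi, rfl⟩ := h
        obtain ⟨a, rfl, ha, _⟩ := memc v i hi hve
        obtain ⟨b, hbo, hb, hab, _⟩ := C a ha ⟨_, heM, hve⟩
        rcases hab with rfl | rfl
        · -- a odd, use the previous edge
          have hbo' := hbo
          rw [Nat.odd_iff] at hbo'
          obtain ⟨c, rfl⟩ : ∃ c, a = c + 1 := ⟨a - 1, by omega⟩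
          refine ⟨s(f c, f (c + 1)), Or.inr ⟨c, Nat.even_iff.mpr (by omega), ?_, rfl⟩,
            Sym2.mem_mk_right _ _⟩
          rw [show (c : ℕ∞) + 1 = ((c + 1 : ℕ) : ℕ∞) by push_cast; ring]
          exact ha
        · -- a = b+1 even, use edge a
          have han : ((b + 1 : ℕ) : ℕ∞) + 1 ≤ n := (ENat.add_one_le_iff (ENat.coe_ne_top _)).mpr ha
          rcases han.lt_or_eq with han | han
          · exact ⟨s(f (b + 1), f (b + 1 + 1)),
              Or.inr ⟨b + 1, Odd.add_one hbo, han, rfl⟩, Sym2.mem_mk_left _ _⟩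
          · exact absurd (⟨_, heM, hve⟩ : f (b + 1) ∈ supp M) (hend (b + 1) han.symm)
    · refine ⟨s(f 0, f 1), Or.inr ⟨0, Even.zero, ?_, rfl⟩, hf0 ▸ Sym2.mem_mk_left _ _⟩
      simpa using hn1


lemma empty_matching (G : SimpleGraph V) : IsMatching G (∅ : Set (Sym2 V)) :=
  ⟨Set.empty_subset _, fun _ e he => absurd he (Set.notMem_empty e)⟩

lemma aug_step {G : SimpleGraph V} (hA : ConditionA G) {M : Set (Sym2 V)}
    (hM : IsMatching G M) (v : V) :
    ∃ M', IsMatching G M' ∧ supp M ∪ {v} ⊆ supp M' := by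
  by_cases hv : v ∈ supp M
  · exact ⟨M, hM, by rintro w (h | rfl); exacts [h, hv]⟩
  · obtain ⟨n, f, hP⟩ := hA M hM v hv
    exact augment hM hP

/-- Every locally finite simple graph on a countable vertex set
satisfying condition (A) has a perfect matching. -/
theorem locally_finite_perfect_matching {V : Type*} [Countable V] (G : SimpleGraph V)
    (hLF : ∀ v : V, (G.neighborSet v).Finite) (hA : ConditionA G) :
    ∃ M : Set (Sym2 V), IsPerfectMatching G M := by
  classical
  cases isEmpty_or_nonempty V with
  | inl h =>
    refine ⟨∅, empty_matching G, ?_⟩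
    ext v
    exact (h.false v).elim
  | inr h =>
    obtain ⟨g, hg⟩ := exists_surjective_nat V
    have step : ∀ (p : {M : Set (Sym2 V) // IsMatching G M}) (v : V),
        ∃ M', IsMatching G M' ∧ supp p.1 ∪ {v} ⊆ supp M' :=
      fun p v => aug_step hA p.2 v
    choose F hF1 hF2 using step
    let Ms : ℕ → {M : Set (Sym2 V) // IsMatching G M} :=
      fun k => Nat.rec ⟨∅, empty_matching G⟩ (fun m prev => ⟨F prev (g m), hF1 prev (g m)⟩) k
    have hmono : ∀ k, supp (Ms k).1 ⊆ supp (Ms (k + 1)).1 :=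
      fun k x hx => hF2 (Ms k) (g k) (Or.inl hx)
    have hcov : ∀ m k, m < k → g m ∈ supp (Ms k).1 := by
      intro m k hmk
      induction k with
      | zero => omega
      | succ k ih =>
        rcases Nat.lt_succ_iff_lt_or_eq.mp hmk with h' | rfl
        · exact hmono k (ih h')
        · exact hF2 (Ms m) (g m) (Or.inr rfl)
    let U : Ultrafilter ℕ := Ultrafilter.of Filter.atTop
    have hU : ∀ s : Set ℕ, s ∈ Filter.atTop → s ∈ U :=
      fun s hs => Ultrafilter.of_le Filter.atTop hs
    refine ⟨{e : Sym2 V | {k | e ∈ (Ms k).1} ∈ U}, ⟨?_, ?_⟩, ?_⟩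
    · intro e he
      obtain ⟨k, hk⟩ := Ultrafilter.nonempty_of_mem he
      exact (Ms k).2.1 hk
    · intro v e he e' he' hv hv'
      obtain ⟨k, hk, hk'⟩ := Ultrafilter.nonempty_of_mem (Filter.inter_mem he he')
      exact (Ms k).2.2 v e hk e' hk' hv hv'
    · rw [Set.eq_univ_iff_forall]
      intro v
      obtain ⟨m, rfl⟩ := hg v
      have hT : {k | m < k} ∈ U := hU _ (Filter.eventually_gt_atTop m)
      have hsub : {k | m < k} ⊆ ⋃ w ∈ G.neighborSet (g m), {k | s(g m, w) ∈ (Ms k).1} := by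
        intro k hk
        obtain ⟨e, he, hve⟩ := hcov m k hk
        obtain ⟨w, rfl⟩ := (Sym2.mem_iff_exists).mp hve
        have hadj : G.Adj (g m) w := (G.mem_edgeSet).mp ((Ms k).2.1 he)
        exact Set.mem_biUnion hadj he
      have : (⋃ w ∈ G.neighborSet (g m), {k | s(g m, w) ∈ (Ms k).1}) ∈ U :=
        Filter.mem_of_superset hT hsub
      obtain ⟨w, _, hw⟩ := (Ultrafilter.finite_biUnion_mem_iff (hLF (g m))).mp this
      exact ⟨s(g m, w), hw, Sym2.mem_mk_left _ _⟩
end PaperMatchings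
end
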